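/- Let X be a real n×k matrix with XᵀX invertible such that the all-ones vector ι lies in the column space of X, let Z be a real n-vector with Z^{⊥X} := (I − P_X)Z ≠ 0, and let W = [X Z]. Then P_W M⁰ P_W = P_X M⁰ P_X + P_{Z^{⊥X}} M⁰ P_{Z^{⊥X}}, where M⁰ = I − (1/n)ιιᵀ and P_{Z^{⊥X}} = Z^{⊥X}(Z^{⊥X})ᵀ / ((Z^{⊥X})ᵀ Z^{⊥X}). -/
import Mathlib


open Matrix

/-- Projection matrix onto the column space of `A`: `P_A = A (Aᵀ A)⁻¹ Aᵀ`. -/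
noncomputable def Pmat {n m : ℕ} (A : Matrix (Fin n) (Fin m) ℝ) : Matrix (Fin n) (Fin n) ℝ :=
  A * (Aᵀ * A)⁻¹ * Aᵀ

/-- Projection matrix onto the span of a single column vector `z`, written with
scalar division: `P_z = z zᵀ / (zᵀ z)`. -/
noncomputable def Pvec {n : ℕ} (z : Matrix (Fin n) (Fin 1) ℝ) : Matrix (Fin n) (Fin n) ℝ :=
  ((zᵀ * z) 0 0)⁻¹ • (z * zᵀ)

/-- The deviation-from-means matrix `M⁰ = I - (1/n) ι ιᵀ`. -/
noncomputable def M0 (n : ℕ) : Matrix (Fin n) (Fin n) ℝ :=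
  (1 : Matrix (Fin n) (Fin n) ℝ) - (n : ℝ)⁻¹ • Matrix.of (fun _ _ => (1 : ℝ))

/-- The augmented matrix `W = [X Z]` obtained by appending the column `Z` to `X`. -/
noncomputable def appendCol {n k : ℕ} (X : Matrix (Fin n) (Fin k) ℝ)
    (Z : Matrix (Fin n) (Fin 1) ℝ) : Matrix (Fin n) (Fin (k + 1)) ℝ :=
  Matrix.of fun i => Fin.snoc (X i) (Z i 0)

/-- Total R² of a regression of `Y` on regressors with projection matrix `P`:
`R² = (Yᵀ P M⁰ P Y)/(Yᵀ M⁰ Y)`. -/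
noncomputable def totalR2 {n : ℕ} (Y : Matrix (Fin n) (Fin 1) ℝ)
    (P : Matrix (Fin n) (Fin n) ℝ) : ℝ :=
  (Yᵀ * P * M0 n * P * Y) 0 0 / (Yᵀ * M0 n * Y) 0 0

/- ## Auxiliary lemmas -/

lemma Pmat_eq {n m : ℕ} (A : Matrix (Fin n) (Fin m) ℝ) :
    Pmat A = A * ((Aᵀ * A)⁻¹ * Aᵀ) := by
  rw [Pmat, Matrix.mul_assoc]

lemma Pmat_transpose {n m : ℕ} (A : Matrix (Fin n) (Fin m) ℝ) : (Pmat A)ᵀ = Pmat A := by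
  simp only [Pmat, Matrix.transpose_mul, Matrix.transpose_nonsing_inv, Matrix.transpose_transpose,
    Matrix.mul_assoc]

lemma Pmat_mul_self {n m : ℕ} (A : Matrix (Fin n) (Fin m) ℝ) (h : IsUnit (Aᵀ * A)) :
    Pmat A * A = A := by
  have hdet : IsUnit (Aᵀ * A).det := (Matrix.isUnit_iff_isUnit_det _).mp h
  rw [Pmat, Matrix.mul_assoc, Matrix.mul_assoc, Matrix.nonsing_inv_mul _ hdet, Matrix.mul_one]

lemma Pmat_idem {n m : ℕ} (A : Matrix (Fin n) (Fin m) ℝ) (h : IsUnit (Aᵀ * A)) :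
    Pmat A * Pmat A = Pmat A := by
  have h2 := Pmat_eq A
  nth_rewrite 2 [h2]
  rw [← Matrix.mul_assoc, Pmat_mul_self A h, ← h2]

/-- Multiplying a column by a 1×1 matrix is scalar multiplication. -/
lemma mul_fin_one {n : ℕ} (z : Matrix (Fin n) (Fin 1) ℝ) (M : Matrix (Fin 1) (Fin 1) ℝ) :
    z * M = M 0 0 • z := by
  ext i j
  have hj : j = 0 := Subsingleton.elim _ _
  subst hj
  simp [Matrix.mul_apply, mul_comm]

/-- A sum-of-squares entry is nonzero for a nonzero column. -/
lemma ztz_ne_zero {n : ℕ} (z : Matrix (Fin n) (Fin 1) ℝ) (hz : z ≠ 0) :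
    (zᵀ * z) 0 0 ≠ 0 := by
  have h : (zᵀ * z) 0 0 = ∑ i, z i 0 * z i 0 := by
    simp [Matrix.mul_apply]
  rw [h]
  intro h0
  apply hz
  have hnn : ∀ i ∈ Finset.univ, (0:ℝ) ≤ z i 0 * z i 0 := fun i _ => mul_self_nonneg _
  have hall := (Finset.sum_eq_zero_iff_of_nonneg hnn).mp h0
  ext i j
  have hj : j = 0 := Subsingleton.elim _ _
  subst hj
  simpa [mul_self_eq_zero] using hall i (Finset.mem_univ i)

lemma mul_appendCol {m n k : ℕ} (Q : Matrix (Fin m) (Fin n) ℝ) (X : Matrix (Fin n) (Fin k) ℝ)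
    (Z : Matrix (Fin n) (Fin 1) ℝ) : Q * appendCol X Z = appendCol (Q * X) (Q * Z) := by
  ext i j
  refine Fin.lastCases ?_ ?_ j
  · simp [appendCol, Matrix.mul_apply]
  · intro j'
    simp [appendCol, Matrix.mul_apply]

/-- `P_W M⁰ P_W = P_X M⁰ P_X + P_{Z^{⊥X}} M⁰ P_{Z^{⊥X}}`. -/
theorem proj_M0_decomp {n k : ℕ} (X : Matrix (Fin n) (Fin k) ℝ)
    (Z : Matrix (Fin n) (Fin 1) ℝ)
    (hX : IsUnit (Xᵀ * X))
    (hiota : ∃ v : Fin k → ℝ, X *ᵥ v = fun _ => (1 : ℝ))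
    (hZperp : Z - Pmat X * Z ≠ 0) :
    Pmat (appendCol X Z) * M0 n * Pmat (appendCol X Z) =
      Pmat X * M0 n * Pmat X +
        Pvec (Z - Pmat X * Z) * M0 n * Pvec (Z - Pmat X * Z) := by
  classical
  set W : Matrix (Fin n) (Fin (k+1)) ℝ := appendCol X Z with hWdef
  set z : Matrix (Fin n) (Fin 1) ℝ := Z - Pmat X * Z with hzdef
  have hdetX : IsUnit (Xᵀ * X).det := (Matrix.isUnit_iff_isUnit_det _).mp hX
  have hPX : Pmat X * X = X := Pmat_mul_self X hX
  have hPt : (Pmat X)ᵀ = Pmat X := Pmat_transpose X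
  have hPP : Pmat X * Pmat X = Pmat X := Pmat_idem X hX
  have hPz : Pmat X * z = 0 := by
    rw [hzdef, Matrix.mul_sub, ← Matrix.mul_assoc, hPP, sub_self]
  have hztX : zᵀ * X = 0 := by
    rw [hzdef, Matrix.transpose_sub, Matrix.sub_mul, Matrix.transpose_mul, hPt,
      Matrix.mul_assoc, hPX, sub_self]
  have hztP : zᵀ * Pmat X = 0 := by
    have h := congrArg Matrix.transpose hPz
    rwa [Matrix.transpose_mul, hPt, Matrix.transpose_zero] at h
  have hc0 : (zᵀ * z) 0 0 ≠ 0 := ztz_ne_zero z hZperp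
  have hztZ : zᵀ * Z = zᵀ * z := by
    nth_rewrite 2 [hzdef]
    rw [Matrix.mul_sub, ← Matrix.mul_assoc, hztP, Matrix.zero_mul, sub_zero]
  -- invertibility of WᵀW
  have hWv : ∀ v : Fin (k+1) → ℝ, W *ᵥ v = 0 → v = 0 := by
    intro v hv
    set U : Matrix (Fin k) (Fin 1) ℝ := Matrix.of (fun j _ => v (Fin.castSucc j)) with hU
    set a : ℝ := v (Fin.last k) with ha
    have hWV : X * U + a • Z = 0 := by
      ext i j
      have hj : j = 0 := Subsingleton.elim _ _
      subst hj
      have h1 : (W *ᵥ v) i = 0 := congrFun hv i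
      rw [Matrix.mulVec, dotProduct] at h1
      rw [Matrix.add_apply, Matrix.smul_apply, Matrix.mul_apply, smul_eq_mul]
      rw [show ∑ j, W i j * v j =
        (∑ j : Fin k, X i j * v (Fin.castSucc j)) + Z i 0 * v (Fin.last k) by
          rw [Fin.sum_univ_castSucc]
          simp [hWdef, appendCol]] at h1
      simpa [hU, ha, mul_comm] using h1
    -- a = 0
    have hZU : zᵀ * (X * U + a • Z) = 0 := by rw [hWV, Matrix.mul_zero]
    rw [Matrix.mul_add, ← Matrix.mul_assoc, hztX, Matrix.zero_mul, zero_add,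
      Matrix.mul_smul, hztZ] at hZU
    have ha0 : a = 0 := by
      have := congrFun (congrFun hZU 0) 0
      rw [Matrix.smul_apply, Matrix.zero_apply, smul_eq_mul] at this
      rcases mul_eq_zero.mp this with h | h
      · exact h
      · exact absurd h hc0
    have hXU : X * U = 0 := by
      rw [ha0, zero_smul, add_zero] at hWV
      exact hWV
    have hU0 : U = 0 := by
      have h1 : (Xᵀ * X) * U = 0 := by rw [Matrix.mul_assoc, hXU, Matrix.mul_zero]
      calc U = ((Xᵀ * X)⁻¹ * (Xᵀ * X)) * U := by
              rw [Matrix.nonsing_inv_mul _ hdetX, Matrix.one_mul]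
        _ = (Xᵀ * X)⁻¹ * ((Xᵀ * X) * U) := by rw [Matrix.mul_assoc]
        _ = 0 := by rw [h1, Matrix.mul_zero]
    funext j
    refine Fin.lastCases ?_ ?_ j
    · exact ha0
    · intro j'
      have := congrFun (congrFun hU0 j') 0
      simpa [hU] using this
  have hWunit : IsUnit (Wᵀ * W) := by
    rw [Matrix.isUnit_iff_isUnit_det, isUnit_iff_ne_zero]
    intro hdet
    obtain ⟨v, hv0, hv⟩ := (Matrix.exists_mulVec_eq_zero_iff).mpr hdet
    apply hv0
    apply hWv
    have h1 : (W *ᵥ v) ⬝ᵥ (W *ᵥ v) = 0 := by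
      have h2 : v ⬝ᵥ ((Wᵀ * W) *ᵥ v) = 0 := by rw [hv, dotProduct_zero]
      rwa [← Matrix.mulVec_mulVec, Matrix.dotProduct_mulVec, Matrix.vecMul_transpose] at h2
    exact dotProduct_self_eq_zero.mp h1
  -- Pmat W fixes the columns
  have hPWW : Pmat W * W = W := Pmat_mul_self W hWunit
  have hPWW' : appendCol (Pmat W * X) (Pmat W * Z) = appendCol X Z := by
    rw [← mul_appendCol, ← hWdef, hPWW, hWdef]
  have hPWX : Pmat W * X = X := by
    ext i j
    have := congrFun (congrFun hPWW' i) (Fin.castSucc j)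
    simpa [appendCol] using this
  have hPWZ : Pmat W * Z = Z := by
    ext i j
    have hj : j = 0 := Subsingleton.elim _ _
    subst hj
    have := congrFun (congrFun hPWW' i) (Fin.last k)
    simpa [appendCol] using this
  -- Q := Pmat X + Pvec z equals Pmat W
  set Q : Matrix (Fin n) (Fin n) ℝ := Pmat X + Pvec z with hQdef
  have hQX : Q * X = X := by
    rw [hQdef, Matrix.add_mul, hPX, Pvec, Matrix.smul_mul, Matrix.mul_assoc, hztX,
      Matrix.mul_zero, smul_zero, add_zero]
  have hPvzZ : Pvec z * Z = z := by
    rw [Pvec, Matrix.smul_mul, Matrix.mul_assoc, hztZ, mul_fin_one, smul_smul,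
      inv_mul_cancel₀ hc0, one_smul]
  have hQZ : Q * Z = Z := by
    rw [hQdef, Matrix.add_mul, hPvzZ, hzdef]
    abel
  have hQW : Q * W = W := by
    rw [hWdef, mul_appendCol, hQX, hQZ]
  have hQt : Qᵀ = Q := by
    rw [hQdef, Matrix.transpose_add, hPt, Pvec, Matrix.transpose_smul, Matrix.transpose_mul,
      Matrix.transpose_transpose]
  have hPWt : (Pmat W)ᵀ = Pmat W := Pmat_transpose W
  have hPWPX : Pmat W * Pmat X = Pmat X := by
    rw [Pmat_eq X, ← Matrix.mul_assoc, hPWX]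
  have hPWz : Pmat W * z = z := by
    rw [hzdef, Matrix.mul_sub, hPWZ, ← Matrix.mul_assoc, hPWPX]
  have hPWQ : Pmat W * Q = Q := by
    rw [hQdef, Matrix.mul_add, hPWPX, Pvec, Matrix.mul_smul, ← Matrix.mul_assoc, hPWz]
  have hQPW : Q * Pmat W = Pmat W := by
    rw [Pmat_eq W, ← Matrix.mul_assoc, hQW]
  have hQ_eq : Q = Pmat W := by
    have h2 := congrArg Matrix.transpose hQPW
    rw [Matrix.transpose_mul, hQt, hPWt] at h2
    rw [← hPWQ, h2]
  -- the ones matrix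
  obtain ⟨v, hv⟩ := hiota
  set ι : Matrix (Fin n) (Fin 1) ℝ := Matrix.of (fun _ _ => (1:ℝ)) with hι
  set V : Matrix (Fin k) (Fin 1) ℝ := Matrix.of (fun j _ => v j) with hV
  have hXV : X * V = ι := by
    ext i j
    have := congrFun hv i
    rw [Matrix.mulVec, dotProduct] at this
    simpa [hι, hV, Matrix.mul_apply] using this
  have hztι : zᵀ * ι = 0 := by
    rw [← hXV, ← Matrix.mul_assoc, hztX, Matrix.zero_mul]
  have hιtz : ιᵀ * z = 0 := by
    have h := congrArg Matrix.transpose hztι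
    rwa [Matrix.transpose_mul, Matrix.transpose_transpose, Matrix.transpose_zero] at h
  have hJ : (Matrix.of (fun _ _ => (1:ℝ)) : Matrix (Fin n) (Fin n) ℝ) = ι * ιᵀ := by
    ext i j
    simp [hι, Matrix.mul_apply]
  have hJz : (ι * ιᵀ) * z = 0 := by
    rw [Matrix.mul_assoc, hιtz, Matrix.mul_zero]
  have hztJ : zᵀ * (ι * ιᵀ) = 0 := by
    rw [← Matrix.mul_assoc, hztι, Matrix.zero_mul]
  have hMP : M0 n * Pvec z = Pvec z := by
    rw [M0, hJ, Matrix.sub_mul, Matrix.one_mul, Matrix.smul_mul, Pvec, Matrix.mul_smul,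
      ← Matrix.mul_assoc, hJz, Matrix.zero_mul, smul_zero, smul_zero, sub_zero]
  have hPM : Pvec z * M0 n = Pvec z := by
    rw [M0, hJ, Matrix.mul_sub, Matrix.mul_one, Matrix.mul_smul, Pvec, Matrix.smul_mul,
      Matrix.mul_assoc, hztJ, Matrix.mul_zero, smul_zero, smul_zero, sub_zero]
  have hcross1 : Pmat X * M0 n * Pvec z = 0 := by
    rw [Matrix.mul_assoc, hMP, Pvec, Matrix.mul_smul, ← Matrix.mul_assoc, hPz,
      Matrix.zero_mul, smul_zero]
  have hcross2 : Pvec z * M0 n * Pmat X = 0 := by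
    rw [hPM, Pvec, Matrix.smul_mul, Matrix.mul_assoc, hztP, Matrix.mul_zero, smul_zero]
  rw [← hQ_eq, hQdef, Matrix.add_mul, Matrix.add_mul, Matrix.mul_add, Matrix.mul_add,
    hcross1, hcross2, add_zero, zero_add]
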